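/- Let A, B, C be nonzero real numbers and consider the cubic Kolmogorov vector field on the unit sphere: P = x(Ay²+Bz²), Q = y(-Ax²+Cz²), R = z(-Bx²-Cy²) (taking α=β=γ=0). A point (x,y,z) on the unit sphere with all coordinates nonzero is a singular point of (P,Q,R) if and only if x² = -C/(B-A-C), y² = B/(B-A-C), and z² = -A/(B-A-C). In particular, such singular points exist in R³ if and only if (A > 0, C > 0, B < 0) or (A < 0, C < 0, B > 0). -/
import Mathlib


theorem stmt_14 (A B C : ℝ) (hA : A ≠ 0) (hB : B ≠ 0) (hC : C ≠ 0) :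
    (∀ x y z : ℝ, x ^ 2 + y ^ 2 + z ^ 2 = 1 → x ≠ 0 → y ≠ 0 → z ≠ 0 →
      ((x * (A * y ^ 2 + B * z ^ 2) = 0 ∧
        y * (-A * x ^ 2 + C * z ^ 2) = 0 ∧
        z * (-B * x ^ 2 - C * y ^ 2) = 0) ↔
       (x ^ 2 = -C / (B - A - C) ∧ y ^ 2 = B / (B - A - C) ∧
        z ^ 2 = -A / (B - A - C)))) ∧
    ((∃ x y z : ℝ, x ^ 2 + y ^ 2 + z ^ 2 = 1 ∧ x ≠ 0 ∧ y ≠ 0 ∧ z ≠ 0 ∧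
        x * (A * y ^ 2 + B * z ^ 2) = 0 ∧
        y * (-A * x ^ 2 + C * z ^ 2) = 0 ∧
        z * (-B * x ^ 2 - C * y ^ 2) = 0) ↔
     ((A > 0 ∧ C > 0 ∧ B < 0) ∨ (A < 0 ∧ C < 0 ∧ B > 0))) := by
  have main : ∀ x y z : ℝ, x ^ 2 + y ^ 2 + z ^ 2 = 1 → x ≠ 0 → y ≠ 0 → z ≠ 0 →
      ((x * (A * y ^ 2 + B * z ^ 2) = 0 ∧
        y * (-A * x ^ 2 + C * z ^ 2) = 0 ∧
        z * (-B * x ^ 2 - C * y ^ 2) = 0) ↔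
       (x ^ 2 = -C / (B - A - C) ∧ y ^ 2 = B / (B - A - C) ∧
        z ^ 2 = -A / (B - A - C))) := by
    intro x y z hs hx hy hz
    constructor
    · rintro ⟨h1, h2, h3⟩
      have h2' : -A * x ^ 2 + C * z ^ 2 = 0 := by
        rcases mul_eq_zero.1 h2 with h | h
        · exact absurd h hy
        · exact h
      have h3' : -B * x ^ 2 - C * y ^ 2 = 0 := by
        rcases mul_eq_zero.1 h3 with h | h
        · exact absurd h hz
        · exact h
      have key : x ^ 2 * (A + C - B) = C := by linear_combination C * hs - h2' + h3'
      have hD : B - A - C ≠ 0 := by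
        intro h
        apply hC
        rw [← key]
        have : A + C - B = 0 := by linarith
        rw [this, mul_zero]
      refine ⟨?_, ?_, ?_⟩
      · rw [eq_div_iff hD]; linear_combination -key
      · rw [eq_div_iff hD]
        have hyC : y ^ 2 * (B - A - C) * C = B * C := by
          linear_combination (-(B - A - C)) * h3' + B * key
        exact mul_right_cancel₀ hC hyC
      · rw [eq_div_iff hD]
        have hzC : z ^ 2 * (B - A - C) * C = -A * C := by
          linear_combination (B - A - C) * h2' + (-A) * key
        exact mul_right_cancel₀ hC hzC
    · rintro ⟨hx2, hy2, hz2⟩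
      have hD : B - A - C ≠ 0 := by
        intro h
        apply pow_ne_zero 2 hx
        rw [hx2, h, div_zero]
      refine ⟨?_, ?_, ?_⟩
      · rw [hy2, hz2]; field_simp; ring
      · rw [hx2, hz2]; field_simp; ring
      · rw [hx2, hy2]; field_simp; ring
  refine ⟨main, ?_⟩
  constructor
  · rintro ⟨x, y, z, hs, hx, hy, hz, h1, h2, h3⟩
    obtain ⟨hx2, hy2, hz2⟩ := (main x y z hs hx hy hz).1 ⟨h1, h2, h3⟩
    have hxp : 0 < x ^ 2 := lt_of_le_of_ne (sq_nonneg x) (Ne.symm (pow_ne_zero 2 hx))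
    have hyp : 0 < y ^ 2 := lt_of_le_of_ne (sq_nonneg y) (Ne.symm (pow_ne_zero 2 hy))
    have hzp : 0 < z ^ 2 := lt_of_le_of_ne (sq_nonneg z) (Ne.symm (pow_ne_zero 2 hz))
    rw [hx2] at hxp; rw [hy2] at hyp; rw [hz2] at hzp
    rcases lt_or_gt_of_ne (show B - A - C ≠ 0 by
      intro h; rw [h, div_zero] at hxp; exact lt_irrefl 0 hxp) with hD | hD
    · left
      rcases div_pos_iff.1 hxp with ⟨h1', h2'⟩ | ⟨h1', h2'⟩
      · linarith
      · rcases div_pos_iff.1 hyp with ⟨hb1, hb2⟩ | ⟨hb1, hb2⟩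
        · linarith
        · rcases div_pos_iff.1 hzp with ⟨ha1, ha2⟩ | ⟨ha1, ha2⟩
          · linarith
          · exact ⟨by linarith, by linarith, hb1⟩
    · right
      rcases div_pos_iff.1 hxp with ⟨h1', h2'⟩ | ⟨h1', h2'⟩
      · rcases div_pos_iff.1 hyp with ⟨hb1, hb2⟩ | ⟨hb1, hb2⟩
        · rcases div_pos_iff.1 hzp with ⟨ha1, ha2⟩ | ⟨ha1, ha2⟩
          · exact ⟨by linarith, by linarith, hb1⟩
          · linarith
        · linarith
      · linarith
  · rintro (⟨hAp, hCp, hBn⟩ | ⟨hAn, hCn, hBp⟩)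
    · have hD : B - A - C < 0 := by linarith
      have hDne : B - A - C ≠ 0 := ne_of_lt hD
      have hu : 0 < -C / (B - A - C) := div_pos_of_neg_of_neg (by linarith) hD
      have hv : 0 < B / (B - A - C) := div_pos_of_neg_of_neg hBn hD
      have hw : 0 < -A / (B - A - C) := div_pos_of_neg_of_neg (by linarith) hD
      refine ⟨Real.sqrt (-C / (B - A - C)), Real.sqrt (B / (B - A - C)),
        Real.sqrt (-A / (B - A - C)), ?_⟩
      have ex : Real.sqrt (-C / (B - A - C)) ^ 2 = -C / (B - A - C) :=
        Real.sq_sqrt hu.le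
      have ey : Real.sqrt (B / (B - A - C)) ^ 2 = B / (B - A - C) :=
        Real.sq_sqrt hv.le
      have ez : Real.sqrt (-A / (B - A - C)) ^ 2 = -A / (B - A - C) :=
        Real.sq_sqrt hw.le
      have hxne : Real.sqrt (-C / (B - A - C)) ≠ 0 := ne_of_gt (Real.sqrt_pos.2 hu)
      have hyne : Real.sqrt (B / (B - A - C)) ≠ 0 := ne_of_gt (Real.sqrt_pos.2 hv)
      have hzne : Real.sqrt (-A / (B - A - C)) ≠ 0 := ne_of_gt (Real.sqrt_pos.2 hw)
      have hs : Real.sqrt (-C / (B - A - C)) ^ 2 + Real.sqrt (B / (B - A - C)) ^ 2 +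
          Real.sqrt (-A / (B - A - C)) ^ 2 = 1 := by
        rw [ex, ey, ez]; field_simp; ring
      obtain ⟨e1, e2, e3⟩ := (main _ _ _ hs hxne hyne hzne).2 ⟨ex, ey, ez⟩
      exact ⟨hs, hxne, hyne, hzne, e1, e2, e3⟩
    · have hD : 0 < B - A - C := by linarith
      have hDne : B - A - C ≠ 0 := ne_of_gt hD
      have hu : 0 < -C / (B - A - C) := div_pos (by linarith) hD
      have hv : 0 < B / (B - A - C) := div_pos hBp hD
      have hw : 0 < -A / (B - A - C) := div_pos (by linarith) hD
      refine ⟨Real.sqrt (-C / (B - A - C)), Real.sqrt (B / (B - A - C)),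
        Real.sqrt (-A / (B - A - C)), ?_⟩
      have ex : Real.sqrt (-C / (B - A - C)) ^ 2 = -C / (B - A - C) :=
        Real.sq_sqrt hu.le
      have ey : Real.sqrt (B / (B - A - C)) ^ 2 = B / (B - A - C) :=
        Real.sq_sqrt hv.le
      have ez : Real.sqrt (-A / (B - A - C)) ^ 2 = -A / (B - A - C) :=
        Real.sq_sqrt hw.le
      have hxne : Real.sqrt (-C / (B - A - C)) ≠ 0 := ne_of_gt (Real.sqrt_pos.2 hu)
      have hyne : Real.sqrt (B / (B - A - C)) ≠ 0 := ne_of_gt (Real.sqrt_pos.2 hv)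
      have hzne : Real.sqrt (-A / (B - A - C)) ≠ 0 := ne_of_gt (Real.sqrt_pos.2 hw)
      have hs : Real.sqrt (-C / (B - A - C)) ^ 2 + Real.sqrt (B / (B - A - C)) ^ 2 +
          Real.sqrt (-A / (B - A - C)) ^ 2 = 1 := by
        rw [ex, ey, ez]; field_simp; ring
      obtain ⟨e1, e2, e3⟩ := (main _ _ _ hs hxne hyne hzne).2 ⟨ex, ey, ez⟩
      exact ⟨hs, hxne, hyne, hzne, e1, e2, e3⟩
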